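/- (Perron–Frobenius property) For p > 1 and G connected, any eigenvector x on the unit p-sphere attaining λ_p(G) = max Q_p has all components strictly positive or all strictly negative. -/

import Mathlib

open Finset

variable {V : Type*}

/-- Signless p-Laplacian form: `Q_p(x) = Σ_{{i,j}∈E} |x_i + x_j|^p`. -/
noncomputable def Qp [Fintype V] (G : SimpleGraph V) [Fintype G.edgeSet] (p : ℝ)
    (x : V → ℝ) : ℝ :=
  ∑ e ∈ G.edgeFinset,
    Sym2.lift ⟨fun i j => |x i + x j| ^ p, fun i j => by simp [add_comm]⟩ e

/-- The p-norm unit sphere condition. -/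
def unitSphere [Fintype V] (p : ℝ) (x : V → ℝ) : Prop := ∑ i, |x i| ^ p = 1

/-- Smallest signless p-Laplacian eigenvalue. -/
noncomputable def qp [Fintype V] (G : SimpleGraph V) [Fintype G.edgeSet] (p : ℝ) : ℝ :=
  sInf {r | ∃ x : V → ℝ, unitSphere p x ∧ Qp G p x = r}

/-- Largest signless p-Laplacian eigenvalue. -/
noncomputable def lamp [Fintype V] (G : SimpleGraph V) [Fintype G.edgeSet] (p : ℝ) : ℝ :=
  sSup {r | ∃ x : V → ℝ, unitSphere p x ∧ Qp G p x = r}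

open Classical in
/-- Number of edges with both endpoints in `S`. -/
noncomputable def eIn [Fintype V] (G : SimpleGraph V) [Fintype G.edgeSet] (S : Finset V) : ℕ :=
  (G.edgeFinset.filter fun e => ∀ v ∈ e, v ∈ S).card

open Classical in
/-- Number of edges with exactly one endpoint in `U`. -/
noncomputable def cutN [Fintype V] (G : SimpleGraph V) [Fintype G.edgeSet] (U : Finset V) : ℕ :=
  (G.edgeFinset.filter fun e => (∃ v ∈ e, v ∈ U) ∧ (∃ w ∈ e, w ∉ U)).card

/-- Desai–Rao bipartiteness parameter ψ(G). -/
noncomputable def psi [Fintype V] [DecidableEq V] (G : SimpleGraph V) [Fintype G.edgeSet] : ℝ :=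
  sInf {r | ∃ S T : Finset V, Disjoint S T ∧ (S ∪ T).Nonempty ∧
    r = (2 * eIn G S + 2 * eIn G T + cutN G (S ∪ T)) / (S ∪ T).card}

open Classical in
/-- `h_g(U)`: min over thresholds `0 ≤ t < max g` of `cut(C_t)/|C_t|` where `C_t = {i : g i > t}`. -/
noncomputable def hgC [Fintype V] [DecidableEq V] (G : SimpleGraph V) [Fintype G.edgeSet]
    (g : V → ℝ) : ℝ :=
  sInf {r | ∃ t : ℝ, 0 ≤ t ∧ t < sSup (Set.range g) ∧
    r = (cutN G (univ.filter fun i => t < g i) : ℝ) / (univ.filter fun i => t < g i).card}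

/-- Eigenpair of the signless p-Laplacian. -/
def IsEigenpair [Fintype V] (G : SimpleGraph V) [DecidableRel G.Adj] (p : ℝ)
    (x : V → ℝ) (μ : ℝ) : Prop :=
  ∀ k, ∑ j ∈ G.neighborFinset k, Real.sign (x k + x j) * |x k + x j| ^ (p - 1)
      = μ * (Real.sign (x k) * |x k| ^ (p - 1))

/-- Vertex bipartiteness: minimum number of vertices to delete to make `G` bipartite. -/
noncomputable def nuG [Fintype V] [DecidableEq V] (G : SimpleGraph V) : ℕ :=
  sInf {k | ∃ S : Finset V, S.card = k ∧ ((SimpleGraph.induce ((↑S : Set V)ᶜ) G).Colorable 2)}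


section AuxPF

/-- One edge term of the signless p-Laplacian form. -/
private noncomputable def edgeTerm (p : ℝ) (x : V → ℝ) : Sym2 V → ℝ :=
  Sym2.lift ⟨fun i j => |x i + x j| ^ p, fun i j => by simp [add_comm]⟩

private lemma edgeTerm_mk (p : ℝ) (x : V → ℝ) (a b : V) :
    edgeTerm p x s(a, b) = |x a + x b| ^ p := rfl

private lemma Qp_eq [Fintype V] (G : SimpleGraph V) [Fintype G.edgeSet] (p : ℝ) (x : V → ℝ) :
    Qp G p x = ∑ e ∈ G.edgeFinset, edgeTerm p x e := rfl

private lemma Qp_bddAbove [Fintype V] (G : SimpleGraph V) [Fintype G.edgeSet] {p : ℝ}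
    (hp : 0 < p) :
    BddAbove {r | ∃ x : V → ℝ, unitSphere p x ∧ Qp G p x = r} := by
  classical
  refine ⟨(G.edgeFinset.card : ℝ) * 2 ^ p, ?_⟩
  rintro r ⟨x, hx, rfl⟩
  have hx' : ∑ i, |x i| ^ p = 1 := hx
  have habs : ∀ i, |x i| ≤ 1 := by
    intro i
    by_contra hgt
    push_neg at hgt
    have h1 : |x i| ^ p ≤ 1 := by
      rw [← hx']
      exact Finset.single_le_sum (fun j _ => Real.rpow_nonneg (abs_nonneg _) _)
        (Finset.mem_univ i)
    have h2 : 1 < |x i| ^ p :=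
      (Real.one_lt_rpow_iff_of_pos (by linarith)).mpr (Or.inl ⟨hgt, hp⟩)
    linarith
  have hb : Qp G p x ≤ G.edgeFinset.card • (2 : ℝ) ^ p := by
    rw [Qp_eq]
    refine Finset.sum_le_card_nsmul _ _ _ fun e he => ?_
    induction e using Sym2.ind with
    | _ a b =>
      rw [edgeTerm_mk]
      refine Real.rpow_le_rpow (abs_nonneg _) ?_ hp.le
      calc |x a + x b| ≤ |x a| + |x b| := abs_add_le _ _
        _ ≤ 2 := by linarith [habs a, habs b]
  simpa [nsmul_eq_mul] using hb

private lemma walk_edge [Fintype V] (G : SimpleGraph V) {y : V → ℝ} (hy0 : ∀ j, 0 ≤ y j) :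
    ∀ {a b : V}, G.Walk a b → 0 < y a → y b = 0 →
      ∃ i k, G.Adj i k ∧ 0 < y i ∧ y k = 0 := by
  intro a b w
  induction w with
  | nil => intro h1 h2; rw [h2] at h1; exact absurd h1 (lt_irrefl 0)
  | @cons a c b h w ih =>
    intro ha hb
    by_cases hcpos : 0 < y c
    · exact ih hcpos hb
    · exact ⟨a, c, h, ha, le_antisymm (not_lt.mp hcpos) (hy0 c)⟩

private lemma no_zero_entry [Fintype V] [DecidableEq V] (G : SimpleGraph V)
    [Fintype G.edgeSet] {p : ℝ} (hp : 1 < p) {y : V → ℝ} (hy0 : ∀ j, 0 ≤ y j)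
    (hys : ∑ j, |y j| ^ p = 1) (hQ : Qp G p y = lamp G p)
    {i k : V} (hik : G.Adj i k) (hyi : 0 < y i) (hyk : y k = 0) : False := by
  classical
  have hp0 : (0 : ℝ) < p := by linarith
  have hbdd := Qp_bddAbove (V := V) G hp0
  set lam : ℝ := lamp G p with hlam
  have hlam0 : 0 ≤ lam := by
    rw [← hQ, Qp_eq]
    refine Finset.sum_nonneg fun e _ => ?_
    induction e using Sym2.ind with
    | _ a b => exact Real.rpow_nonneg (abs_nonneg _) _
  set c : ℝ := p * y i ^ (p - 1) with hc_def
  have hc : 0 < c := mul_pos hp0 (Real.rpow_pos_of_pos hyi _)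
  have hbase : 0 < c / (lam + 1) := div_pos hc (by linarith)
  set ε : ℝ := (c / (lam + 1)) ^ (p - 1)⁻¹ with hε_def
  have hεpos : 0 < ε := Real.rpow_pos_of_pos hbase _
  have hεpow : ε ^ (p - 1) = c / (lam + 1) := by
    rw [hε_def, ← Real.rpow_mul hbase.le,
      inv_mul_cancel₀ (by linarith : p - 1 ≠ 0), Real.rpow_one]
  set z : V → ℝ := Function.update y k ε with hz_def
  have hyz : ∀ j, y j ≤ z j := by
    intro j
    by_cases h : j = k
    · subst h; rw [hz_def, Function.update_self, hyk]; exact hεpos.le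
    · rw [hz_def, Function.update_of_ne h]
  have hz0 : ∀ j, 0 ≤ z j := fun j => le_trans (hy0 j) (hyz j)
  have hzk : z k = ε := by rw [hz_def, Function.update_self]
  have hzi : z i = y i := by rw [hz_def, Function.update_of_ne hik.ne]
  have hsum : ∑ j, |z j| ^ p = 1 + ε ^ p := by
    have hterm : ∀ j, |z j| ^ p = |y j| ^ p + (if j = k then ε ^ p else 0) := by
      intro j
      by_cases h : j = k
      · subst h
        rw [hzk, hyk, if_pos rfl, abs_of_nonneg hεpos.le]
        simp [Real.zero_rpow (ne_of_gt hp0)]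
      · rw [hz_def, Function.update_of_ne h, if_neg h, add_zero]
    rw [Finset.sum_congr rfl fun j _ => hterm j, Finset.sum_add_distrib, hys]
    simp
  have he0 : s(i, k) ∈ G.edgeFinset := by
    rw [SimpleGraph.mem_edgeFinset, SimpleGraph.mem_edgeSet]; exact hik
  have hQz_lower : Qp G p y + ((y i + ε) ^ p - y i ^ p) ≤ Qp G p z := by
    rw [Qp_eq, Qp_eq, ← Finset.add_sum_erase _ _ he0, ← Finset.add_sum_erase _ _ he0]
    have h1 : edgeTerm p y s(i, k) = y i ^ p := by
      rw [edgeTerm_mk, hyk, add_zero, abs_of_nonneg (hy0 i)]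
    have h2 : edgeTerm p z s(i, k) = (y i + ε) ^ p := by
      rw [edgeTerm_mk, hzi, hzk,
        abs_of_nonneg (add_nonneg (hy0 i) hεpos.le)]
    have h3 : ∑ e ∈ G.edgeFinset.erase s(i, k), edgeTerm p y e ≤
        ∑ e ∈ G.edgeFinset.erase s(i, k), edgeTerm p z e := by
      refine Finset.sum_le_sum fun e _ => ?_
      induction e using Sym2.ind with
      | _ a b =>
        rw [edgeTerm_mk, edgeTerm_mk]
        refine Real.rpow_le_rpow (abs_nonneg _) ?_ hp0.le
        rw [abs_of_nonneg (add_nonneg (hy0 a) (hy0 b)),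
          abs_of_nonneg (add_nonneg (hz0 a) (hz0 b))]
        exact add_le_add (hyz a) (hyz b)
    rw [h1, h2]
    linarith
  have h1ε : (0 : ℝ) < 1 + ε ^ p := by positivity
  have hQz_upper : Qp G p z ≤ lam * (1 + ε ^ p) := by
    set s : ℝ := (1 + ε ^ p) ^ p⁻¹ with hs_def
    have hs : 0 < s := Real.rpow_pos_of_pos h1ε _
    have hsp : s ^ p = 1 + ε ^ p := by
      rw [hs_def, ← Real.rpow_mul h1ε.le, inv_mul_cancel₀ (ne_of_gt hp0), Real.rpow_one]
    set w : V → ℝ := fun j => z j / s with hw_def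
    have hw_sphere : ∑ j, |w j| ^ p = 1 := by
      have hterm : ∀ j, |w j| ^ p = |z j| ^ p / (1 + ε ^ p) := by
        intro j
        rw [hw_def]
        rw [abs_div, abs_of_nonneg hs.le, Real.div_rpow (abs_nonneg _) hs.le, hsp]
      rw [Finset.sum_congr rfl fun j _ => hterm j, ← Finset.sum_div, hsum]
      field_simp
    have hQw : Qp G p w = Qp G p z / (1 + ε ^ p) := by
      rw [Qp_eq, Qp_eq, Finset.sum_div]
      refine Finset.sum_congr rfl fun e _ => ?_
      induction e using Sym2.ind with
      | _ a b =>
        rw [edgeTerm_mk, edgeTerm_mk, hw_def]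
        show |z a / s + z b / s| ^ p = |z a + z b| ^ p / (1 + ε ^ p)
        rw [← add_div, abs_div, abs_of_nonneg hs.le,
          Real.div_rpow (abs_nonneg _) hs.le, hsp]
    have hle : Qp G p w ≤ lam := le_csSup hbdd ⟨w, hw_sphere, rfl⟩
    rw [hQw, div_le_iff₀ h1ε] at hle
    linarith
  have hbern : y i ^ p + c * ε ≤ (y i + ε) ^ p := by
    have ht : (-1 : ℝ) ≤ ε / y i :=
      le_trans (by norm_num : (-1:ℝ) ≤ 0) (by positivity)
    have h1 : 1 + p * (ε / y i) ≤ (1 + ε / y i) ^ p :=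
      one_add_mul_self_le_rpow_one_add ht hp.le
    have h2 : (y i + ε) ^ p = y i ^ p * (1 + ε / y i) ^ p := by
      rw [← Real.mul_rpow hyi.le (by positivity : (0 : ℝ) ≤ 1 + ε / y i)]
      congr 1
      field_simp
    have hdiv : y i ^ p / y i = y i ^ (p - 1) := by
      nth_rewrite 1 [show p = (p - 1) + 1 by ring]
      rw [Real.rpow_add_one (ne_of_gt hyi), mul_div_assoc, div_self (ne_of_gt hyi), mul_one]
    have h3 : y i ^ p * (1 + p * (ε / y i)) = y i ^ p + c * ε := by
      rw [hc_def, ← hdiv]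
      field_simp
    calc y i ^ p + c * ε = y i ^ p * (1 + p * (ε / y i)) := h3.symm
      _ ≤ y i ^ p * (1 + ε / y i) ^ p :=
          mul_le_mul_of_nonneg_left h1 (Real.rpow_nonneg hyi.le _)
      _ = (y i + ε) ^ p := h2.symm
  have hεp : ε ^ p = c / (lam + 1) * ε := by
    rw [show p = (p - 1) + 1 by ring, Real.rpow_add_one (ne_of_gt hεpos), hεpow]
  have hexp : lam * (1 + ε ^ p) = lam + lam * (c / (lam + 1)) * ε := by
    rw [hεp]; ring
  have key : c * ε ≤ lam * (c / (lam + 1)) * ε := by linarith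
  have hlt : lam * (c / (lam + 1)) < c := by
    have hrw : lam * (c / (lam + 1)) = c * (lam / (lam + 1)) := by ring
    have hlt1 : lam / (lam + 1) < 1 := by
      rw [div_lt_one (by linarith)]; linarith
    rw [hrw]
    nlinarith
  nlinarith [mul_lt_mul_of_pos_right hlt hεpos]

end AuxPF

theorem stmt_12 [Fintype V] [DecidableEq V] (G : SimpleGraph V) [DecidableRel G.Adj]
    (hc : G.Connected) (p : ℝ) (hp : 1 < p) (x : V → ℝ)
    (hx : unitSphere p x) (hmax : Qp G p x = lamp G p) :
    (∀ i, 0 < x i) ∨ (∀ i, x i < 0) := by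
  classical
  have hp0 : (0 : ℝ) < p := by linarith
  have hx' : ∑ i, |x i| ^ p = 1 := hx
  set y : V → ℝ := fun i => |x i| with hy_def
  have hy0 : ∀ j, (0 : ℝ) ≤ y j := fun j => abs_nonneg _
  have hys : ∑ j, |y j| ^ p = 1 := by simpa [hy_def, abs_abs] using hx'
  have hbdd := Qp_bddAbove (V := V) G hp0
  have hterm_le : ∀ e ∈ G.edgeFinset, edgeTerm p x e ≤ edgeTerm p y e := by
    intro e _
    induction e using Sym2.ind with
    | _ a b =>
      rw [edgeTerm_mk, edgeTerm_mk]
      refine Real.rpow_le_rpow (abs_nonneg _) ?_ hp0.le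
      calc |x a + x b| ≤ |x a| + |x b| := abs_add_le _ _
        _ = |y a + y b| := by
            rw [abs_of_nonneg (add_nonneg (hy0 a) (hy0 b))]
  have hQxy : Qp G p x ≤ Qp G p y := by
    rw [Qp_eq, Qp_eq]; exact Finset.sum_le_sum hterm_le
  have hQy_le : Qp G p y ≤ lamp G p := le_csSup hbdd ⟨y, hys, rfl⟩
  have hQy : Qp G p y = lamp G p :=
    le_antisymm hQy_le (by rw [← hmax]; exact hQxy)
  have hxne : ∀ j, x j ≠ 0 := by
    intro j hj
    have hm : ∃ m, 0 < y m := by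
      by_contra h
      push_neg at h
      have hall : ∀ m, y m = 0 := fun m => le_antisymm (h m) (hy0 m)
      have hzero : (∑ j, |y j| ^ p) = 0 := by
        simp [hall, Real.zero_rpow (ne_of_gt hp0)]
      rw [hys] at hzero; norm_num at hzero
    obtain ⟨m, hm⟩ := hm
    have hyj : y j = 0 := by rw [hy_def]; simpa using hj
    obtain ⟨w⟩ := hc.preconnected m j
    obtain ⟨i', k', hik, hyi, hyk⟩ := walk_edge G hy0 w hm hyj
    exact no_zero_entry G hp hy0 hys hQy hik hyi hyk
  have hsum_eq : ∑ e ∈ G.edgeFinset, edgeTerm p x e = ∑ e ∈ G.edgeFinset, edgeTerm p y e := by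
    rw [← Qp_eq, ← Qp_eq, hmax, hQy]
  have heq : ∀ e ∈ G.edgeFinset, edgeTerm p x e = edgeTerm p y e :=
    (Finset.sum_eq_sum_iff_of_le hterm_le).mp hsum_eq
  have hedge : ∀ a b, G.Adj a b → 0 < x a * x b := by
    intro a b hab
    have he : s(a, b) ∈ G.edgeFinset := by
      rw [SimpleGraph.mem_edgeFinset, SimpleGraph.mem_edgeSet]; exact hab
    have h1 := heq _ he
    rw [edgeTerm_mk, edgeTerm_mk] at h1
    have h2 : |x a + x b| = |y a + y b| := by
      rcases lt_trichotomy |x a + x b| |y a + y b| with h | h | h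
      · exact absurd h1 (ne_of_lt (Real.rpow_lt_rpow (abs_nonneg _) h hp0))
      · exact h
      · exact absurd h1.symm (ne_of_lt (Real.rpow_lt_rpow (abs_nonneg _) h hp0))
    have h3 : |x a + x b| = |x a| + |x b| := by
      rw [h2, abs_of_nonneg (add_nonneg (hy0 a) (hy0 b))]
    have h4 : (x a + x b) ^ 2 = (|x a| + |x b|) ^ 2 := by
      rw [← sq_abs (x a + x b), h3]
    have h5 : x a * x b = |x a| * |x b| := by
      nlinarith [sq_abs (x a), sq_abs (x b)]
    rw [h5]
    exact mul_pos (abs_pos.mpr (hxne a)) (abs_pos.mpr (hxne b))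
  have hwalk : ∀ {a b : V}, G.Walk a b → 0 < x a * x b := by
    intro a b w
    induction w with
    | nil => exact mul_self_pos.mpr (hxne _)
    | @cons a c b h w ih =>
      have h1 := hedge a c h
      nlinarith [mul_self_pos.mpr (hxne c)]
  obtain ⟨i0⟩ := hc.nonempty
  by_cases h0 : 0 < x i0
  · left
    intro j
    have hj := hwalk ((hc.preconnected i0 j).some)
    by_contra hjle
    push_neg at hjle
    nlinarith
  · right
    intro j
    have hneg : x i0 < 0 := lt_of_le_of_ne (not_lt.mp h0) (hxne i0)
    have hj := hwalk ((hc.preconnected i0 j).some)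
    by_contra hjle
    push_neg at hjle
    nlinarith
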